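/- sup_{y ≥ 0} S(x,y) → 0 as x → ∞; that is, sup_{y ≥ 0} E[T_{x,y}] tends to 0 as x → ∞. -/

import Mathlib

open MeasureTheory Filter Set
open scoped ENNReal

/-- Survival function of `T^{(1,x)}`: `G1(x,t) = exp(−∫_0^t φ(x+cv) dv)`. -/
noncomputable def G1 (c : ℝ) (φ : ℝ → ℝ) (x t : ℝ) : ℝ :=
  Real.exp (-∫ v in (0:ℝ)..t, φ (x + c * v))

/-- Survival function of `T^{(2,y)}`: `G2(y,t) = exp(−(y/α)(1−e^{−αt}))`. -/
noncomputable def G2 (α : ℝ) (y t : ℝ) : ℝ :=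
  Real.exp (-(y / α) * (1 - Real.exp (-α * t)))

/-- `S(x,y) = ∫_0^∞ G1(x,t) G2(y,t) dt`, the expectation of
`T_{x,y} = min (T^{(1,x)}, T^{(2,y)})` for independent `T^{(1,x)}`, `T^{(2,y)}`. -/
noncomputable def S (c α : ℝ) (φ : ℝ → ℝ) (x y : ℝ) : ℝ≥0∞ :=
  ∫⁻ t in Set.Ioi (0:ℝ), ENNReal.ofReal (G1 c φ x t * G2 α y t)


/-- `sup_{y ≥ 0} S(x,y) → 0` as `x → ∞`; that is, `sup_{y ≥ 0} E[T_{x,y}]` tends to `0`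
as `x → ∞`. -/
theorem sup_expectation_tendsto_zero_of_x
    (c α : ℝ) (hc : 0 < c) (hα : 0 < α)
    (φ : ℝ → ℝ) (hφmono : Monotone φ) (hφnonneg : ∀ x, 0 ≤ φ x)
    (hφbot : Tendsto φ atBot (nhds 0)) (hφtop : Tendsto φ atTop atTop) :
    Tendsto (fun x : ℝ => ⨆ y : Set.Ici (0:ℝ), S c α φ x y) atTop (nhds 0) := by
  have h0 : Tendsto (fun x : ℝ => ENNReal.ofReal (φ x)⁻¹) atTop (nhds 0) := by
    have : Tendsto (fun x : ℝ => (φ x)⁻¹) atTop (nhds 0) := hφtop.inv_tendsto_atTop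
    have h := (ENNReal.continuous_ofReal.tendsto 0).comp this
    rw [ENNReal.ofReal_zero] at h
    exact h
  refine tendsto_of_tendsto_of_tendsto_of_le_of_le' tendsto_const_nhds h0
    (Eventually.of_forall fun x => zero_le) ?_
  filter_upwards [hφtop.eventually_ge_atTop 1] with x hx
  have hMpos : (0:ℝ) < φ x := lt_of_lt_of_le one_pos hx
  refine iSup_le fun y => ?_
  have hy : (0:ℝ) ≤ (y : ℝ) := y.2
  have key : S c α φ x y ≤ ∫⁻ t in Ioi (0:ℝ), ENNReal.ofReal (Real.exp (-(φ x) * t)) := by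
    refine setLIntegral_mono' measurableSet_Ioi fun t ht => ?_
    refine ENNReal.ofReal_le_ofReal ?_
    have ht0 : (0:ℝ) ≤ t := le_of_lt ht
    have hG2 : G2 α y t ≤ 1 := by
      rw [G2, ← Real.exp_zero]
      apply Real.exp_le_exp.mpr
      have h1 : Real.exp (-α * t) ≤ 1 := by
        rw [← Real.exp_zero]
        exact Real.exp_le_exp.mpr (by nlinarith)
      have h2 : 0 ≤ (y : ℝ) / α := div_nonneg hy hα.le
      have e0 : Real.exp 0 = 1 := Real.exp_zero
      nlinarith
    have hG1 : G1 c φ x t ≤ Real.exp (-(φ x) * t) := by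
      rw [G1]
      apply Real.exp_le_exp.mpr
      have hint : IntervalIntegrable (fun v => φ (x + c * v)) volume 0 t := by
        have hm : Monotone fun v => φ (x + c * v) :=
          hφmono.comp fun a b hab => by nlinarith
        exact hm.intervalIntegrable
      have hmono : ∫ v in (0:ℝ)..t, φ x ≤ ∫ v in (0:ℝ)..t, φ (x + c * v) := by
        refine intervalIntegral.integral_mono_on ht0 intervalIntegrable_const hint
          fun v hv => hφmono ?_
        nlinarith [hv.1]
      rw [intervalIntegral.integral_const] at hmono
      simp only [smul_eq_mul, sub_zero] at hmono
      nlinarith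
    have hG2nn : 0 ≤ G2 α y t := Real.exp_nonneg _
    have hG1nn : 0 ≤ G1 c φ x t := Real.exp_nonneg _
    calc G1 c φ x t * G2 α y t ≤ G1 c φ x t * 1 := by nlinarith
      _ ≤ Real.exp (-(φ x) * t) := by rwa [mul_one]
  refine key.trans (le_of_eq ?_)
  rw [← ofReal_integral_eq_lintegral_ofReal (exp_neg_integrableOn_Ioi 0 hMpos)
    (Eventually.of_forall fun t => Real.exp_nonneg _)]
  have : (∫ t in Ioi (0:ℝ), Real.exp (-(φ x) * t)) = (φ x)⁻¹ := by
    have := integral_comp_mul_left_Ioi (fun u => Real.exp (-u)) 0 hMpos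
    simp only [mul_zero, smul_eq_mul] at this
    calc (∫ t in Ioi (0:ℝ), Real.exp (-(φ x) * t))
        = ∫ t in Ioi (0:ℝ), Real.exp (-(φ x * t)) := by
          simp [neg_mul]
      _ = (φ x)⁻¹ * ∫ u in Ioi (0:ℝ), Real.exp (-u) := this
      _ = (φ x)⁻¹ := by rw [integral_exp_neg_Ioi_zero, mul_one]
  rw [this]
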